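/- Let m be a positive integer and let x be a real number with 0 < x < π. Then ∑_{n=1}^∞ sin((2n-1)x)/(2n-1)^{2m} = ((-1)^m π^{2m-1}/(2·(2m-1)!)) · ( 2^{2m} ζ'(1-2m, 1 - x/(2π)) − 2^{2m} ζ'(1-2m, x/(2π)) − ζ'(1-2m, 1 - x/π) + ζ'(1-2m, x/π) ). -/

import Mathlib

open Filter Topology Finset Real

/-- The Hurwitz zeta function `ζ(s, a)` for a real parameter `a > 0`: the meromorphic
continuation in `s` of the series `∑ k : ℕ, (k + a) ^ (-s)` (convergent for `Re s > 1`).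
For `0 < a ≤ 1` it is Mathlib's `HurwitzZeta.hurwitzZeta`; for larger `a` it is obtained
through the recurrence `ζ(s, a) = ζ(s, a + 1) + a ^ (-s)`. -/
noncomputable def hzeta (s : ℂ) (a : ℝ) : ℂ :=
  HurwitzZeta.hurwitzZeta (a : UnitAddCircle) s -
    ∑ j ∈ Finset.range (⌈a⌉₊ - 1), ((a : ℂ) - ((⌈a⌉₊ : ℂ) - 1) + j) ^ (-s)

section Aux
open Complex HurwitzZeta


lemma sinZeta_even_eq (a : UnitAddCircle) (m : ℕ) (hm : 0 < m) :
    sinZeta a (2 * (m : ℂ)) = (-1) ^ (m + 1) * (2 * (π : ℂ)) ^ (2 * m) /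
      ((π : ℂ) * (Nat.factorial (2 * m - 1) : ℂ)) *
      deriv (hurwitzZetaOdd a) (1 - 2 * (m : ℂ)) := by
  set s₀ : ℂ := 2 * (m : ℂ) with hs₀
  set A : ℂ → ℂ := fun s => 2 * (2 * (π : ℂ)) ^ (-s) * Complex.Gamma s with hA_def
  have hres₀ : s₀.re = 2 * m := by simp [hs₀]
  have hs₀ne : ∀ n : ℕ, s₀ ≠ -(n : ℂ) := by
    intro n h
    have := congrArg Complex.re h
    simp [hres₀] at this
    have h1 : (0:ℝ) ≤ (n:ℝ) := Nat.cast_nonneg n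
    have h2 : (1:ℝ) ≤ (m:ℝ) := by exact_mod_cast hm
    linarith
  have hev : (fun s => hurwitzZetaOdd a (1 - s)) =ᶠ[𝓝 s₀]
      (fun s => A s * Complex.sin (π * s / 2) * sinZeta a s) := by
    have hre : ∀ᶠ s : ℂ in 𝓝 s₀, 0 < s.re := by
      refine (Complex.continuous_re.tendsto s₀).eventually (eventually_gt_nhds ?_)
      rw [hres₀]
      have : (0:ℝ) < m := by exact_mod_cast hm
      linarith
    filter_upwards [hre] with s hs
    refine hurwitzZetaOdd_one_sub a fun n h => ?_
    rw [h] at hs; simp at hs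
    have : (0:ℝ) ≤ (n:ℝ) := Nat.cast_nonneg n
    linarith
  have hF : HasDerivAt (fun s => hurwitzZetaOdd a (1 - s))
      (-(deriv (hurwitzZetaOdd a) (1 - s₀))) s₀ := by
    have h1 : HasDerivAt (fun s : ℂ => 1 - s) (-1) s₀ := (hasDerivAt_id s₀).const_sub 1
    have h2 := (differentiable_hurwitzZetaOdd a (1 - s₀)).hasDerivAt
    exact (h2.comp s₀ h1).congr_deriv (by ring)
  have hA : DifferentiableAt ℂ A s₀ := by
    refine DifferentiableAt.mul (DifferentiableAt.mul (differentiableAt_const _) ?_)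
      (Complex.differentiableAt_Gamma _ hs₀ne)
    exact (differentiableAt_id.neg).const_cpow
      (Or.inl (mul_ne_zero two_ne_zero (by exact_mod_cast Real.pi_ne_zero)))
  have hq : HasDerivAt (fun s : ℂ => Complex.sin (π * s / 2))
      ((π : ℂ) / 2 * Complex.cos (π * s₀ / 2)) s₀ := by
    have hin : HasDerivAt (fun s : ℂ => (π : ℂ) * s / 2) ((π : ℂ) / 2) s₀ := by
      simpa using ((hasDerivAt_id s₀).const_mul (π : ℂ)).div_const 2
    exact ((Complex.hasDerivAt_sin ((π : ℂ) * s₀ / 2)).comp s₀ hin).congr_deriv (mul_comm _ _)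
  have hZ : HasDerivAt (sinZeta a) (deriv (sinZeta a) s₀) s₀ :=
    ((differentiableAt_sinZeta a) s₀).hasDerivAt
  have hG := (hA.hasDerivAt.mul hq).mul hZ
  have harg : (π : ℂ) * s₀ / 2 = ((m * π : ℝ) : ℂ) := by push_cast [hs₀]; ring
  have hsin : Complex.sin ((π : ℂ) * s₀ / 2) = 0 := by
    rw [harg, ← Complex.ofReal_sin, Real.sin_nat_mul_pi, Complex.ofReal_zero]
  have hcos : Complex.cos ((π : ℂ) * s₀ / 2) = (-1) ^ m := by
    have hc : Real.cos (m * π) = (-1) ^ m := by simpa using Real.cos_add_nat_mul_pi 0 m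
    rw [harg, ← Complex.ofReal_cos, hc]; push_cast; ring
  have key : -(deriv (hurwitzZetaOdd a) (1 - s₀)) =
      (deriv A s₀ * Complex.sin (π * s₀ / 2) + A s₀ * ((π : ℂ) / 2 * Complex.cos (π * s₀ / 2)))
        * sinZeta a s₀ + A s₀ * Complex.sin (π * s₀ / 2) * deriv (sinZeta a) s₀ := by
    rw [← hF.deriv, hev.deriv_eq]
    exact hG.deriv
  rw [hsin, hcos] at key
  have hGam : Complex.Gamma s₀ = (Nat.factorial (2 * m - 1) : ℂ) := by
    have h2m : (2 * m - 1) + 1 = 2 * m := by omega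
    have h : ((2 * m - 1 : ℕ) : ℂ) + 1 = s₀ := by
      rw [hs₀, ← Nat.cast_one (R := ℂ), ← Nat.cast_add, h2m]; push_cast; ring
    rw [← h, Complex.Gamma_nat_eq_factorial]
  have hpow : (2 * (π : ℂ)) ^ (-s₀) = ((2 * (π : ℂ)) ^ (2 * m) : ℂ)⁻¹ := by
    rw [hs₀, show -(2 * (m : ℂ)) = -((2 * m : ℕ) : ℂ) by push_cast; ring,
      Complex.cpow_neg, Complex.cpow_natCast]
  have hAval : A s₀ = 2 * ((2 * (π : ℂ)) ^ (2 * m))⁻¹ * (Nat.factorial (2 * m - 1) : ℂ) := by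
    rw [hA_def]; simp only []; rw [hpow, hGam]
  rw [hAval] at key
  have hπ : (π : ℂ) ≠ 0 := by exact_mod_cast Real.pi_ne_zero
  have h2π : (2 * (π : ℂ)) ^ (2 * m) ≠ 0 :=
    pow_ne_zero _ (mul_ne_zero two_ne_zero (by exact_mod_cast Real.pi_ne_zero))
  have hfac : (Nat.factorial (2 * m - 1) : ℂ) ≠ 0 := by
    exact_mod_cast Nat.cast_ne_zero.mpr (Nat.factorial_ne_zero _)
  have h1m : ((-1 : ℂ)) ^ m * (-1) ^ m = 1 := by
    rw [← pow_add]
    exact Even.neg_one_pow ⟨m, by ring⟩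
  have hPi : (2 * (π : ℂ)) ^ (2 * m) * ((2 * (π : ℂ)) ^ (2 * m))⁻¹ = 1 := mul_inv_cancel₀ h2π
  have hQi : ((π : ℂ) * (Nat.factorial (2 * m - 1) : ℂ)) *
      ((π : ℂ) * (Nat.factorial (2 * m - 1) : ℂ))⁻¹ = 1 := mul_inv_cancel₀ (mul_ne_zero hπ hfac)
  have key2 : sinZeta a s₀ = sinZeta a s₀ * ((2 * (π : ℂ)) ^ (2 * m) * ((2 * (π : ℂ)) ^ (2 * m))⁻¹) *
      (((π : ℂ) * (Nat.factorial (2 * m - 1) : ℂ)) * ((π : ℂ) * (Nat.factorial (2 * m - 1) : ℂ))⁻¹) *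
      ((-1 : ℂ) ^ m * (-1) ^ m) := by
    rw [hPi, hQi, h1m]; ring
  rw [key2]
  linear_combination (-(-1:ℂ)^m * (2 * (π : ℂ)) ^ (2 * m) *
    ((π : ℂ) * (Nat.factorial (2 * m - 1) : ℂ))⁻¹) * key


lemma coe_one_sub' (a : ℝ) : ((1 - a : ℝ) : UnitAddCircle) = -((a : ℝ) : UnitAddCircle) := by
  have : ((1 : ℝ) : UnitAddCircle) = 0 := AddCircle.coe_period (1 : ℝ)
  rw [sub_eq_add_neg, AddCircle.coe_add, this, zero_add]
  rfl

lemma hzeta_eq (a : ℝ) (ha0 : 0 < a) (ha1 : a ≤ 1) :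
    (fun s => hzeta s a) = hurwitzZeta (a : UnitAddCircle) := by
  funext s
  have hc : ⌈a⌉₊ = 1 := (Nat.ceil_eq_iff one_ne_zero).mpr (by simpa using ⟨ha0, ha1⟩)
  rw [hzeta, hc]
  simp

lemma hzeta_deriv_comb (a : ℝ) (ha0 : 0 < a) (ha1 : a < 1) (m : ℕ) (hm : 0 < m) :
    deriv (fun s => hzeta s (1 - a)) (1 - 2 * (m : ℂ)) -
      deriv (fun s => hzeta s a) (1 - 2 * (m : ℂ)) =
    -2 * deriv (hurwitzZetaOdd (a : ℝ)) (1 - 2 * (m : ℂ)) := by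
  have hs1 : (1 - 2 * (m : ℂ)) ≠ 1 := by
    intro h
    have : (2 * (m : ℂ)) = 0 := by linear_combination -h
    have hm' : (m : ℂ) ≠ 0 := Nat.cast_ne_zero.mpr hm.ne'
    simp [hm'] at this
  rw [hzeta_eq a ha0 ha1.le, hzeta_eq (1 - a) (by linarith) (by linarith), coe_one_sub']
  have hE : ∀ b : UnitAddCircle, deriv (hurwitzZeta b) (1 - 2 * (m : ℂ)) =
      deriv (hurwitzZetaEven b) (1 - 2 * (m : ℂ)) + deriv (hurwitzZetaOdd b) (1 - 2 * (m : ℂ)) := by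
    intro b
    have h1 : hurwitzZeta b = fun s => hurwitzZetaEven b s + hurwitzZetaOdd b s := rfl
    rw [h1]
    exact deriv_add (differentiableAt_hurwitzZetaEven b hs1)
      (differentiable_hurwitzZetaOdd b _)
  rw [hE, hE]
  have hEneg : hurwitzZetaEven (-(a : UnitAddCircle)) = hurwitzZetaEven (a : UnitAddCircle) :=
    funext fun s => hurwitzZetaEven_neg _ s
  have hOneg : hurwitzZetaOdd (-(a : UnitAddCircle)) = fun s => -hurwitzZetaOdd (a : UnitAddCircle) s :=
    funext fun s => hurwitzZetaOdd_neg _ s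
  rw [hEneg, hOneg, deriv.fun_neg]
  ring


lemma hasSum_odd_sin (x : ℝ) (m : ℕ) (hm : 0 < m) :
    HasSum (fun n : ℕ => (Real.sin ((2 * n + 1) * x) : ℂ) / (2 * (n : ℂ) + 1) ^ (2 * m))
      (sinZeta ((x / (2 * π) : ℝ) : UnitAddCircle) (2 * (m : ℂ)) -
        ((2 : ℂ) ^ (2 * m))⁻¹ * sinZeta ((x / π : ℝ) : UnitAddCircle) (2 * (m : ℂ))) := by
  have hπ : (π : ℝ) ≠ 0 := Real.pi_ne_zero
  have hre : (1 : ℝ) < (2 * (m : ℂ)).re := by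
    have h1 : (1 : ℝ) ≤ (m : ℝ) := by exact_mod_cast hm
    have : (2 * (m : ℂ)).re = 2 * (m : ℝ) := by
      simp [Complex.mul_re]
    rw [this]; linarith
  have hcp : ∀ n : ℂ, n ^ (2 * (m : ℂ)) = n ^ (2 * m) := by
    intro n
    rw [show (2 * (m : ℂ)) = ((2 * m : ℕ) : ℂ) by push_cast; ring, Complex.cpow_natCast]
  have h1 : HasSum (fun n : ℕ => (Real.sin (n * x) : ℂ) / (n : ℂ) ^ (2 * m))
      (sinZeta ((x / (2 * π) : ℝ) : UnitAddCircle) (2 * (m : ℂ))) := by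
    refine (hasSum_nat_sinZeta (x / (2 * π)) hre).congr_fun fun n => ?_
    have e1 : 2 * π * (x / (2 * π)) * (n : ℝ) = n * x := by field_simp
    rw [e1, hcp]
  have h2 : HasSum (fun n : ℕ => (Real.sin (n * (2 * x)) : ℂ) / (n : ℂ) ^ (2 * m))
      (sinZeta ((x / π : ℝ) : UnitAddCircle) (2 * (m : ℂ))) := by
    refine (hasSum_nat_sinZeta (x / π) hre).congr_fun fun n => ?_
    have e1 : 2 * π * (x / π) * (n : ℝ) = n * (2 * x) := by field_simp
    rw [e1, hcp]
  set f : ℕ → ℂ := fun n => (Real.sin (n * x) : ℂ) / (n : ℂ) ^ (2 * m) with hf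
  have h3 : HasSum (fun k : ℕ => f (2 * k))
      (((2 : ℂ) ^ (2 * m))⁻¹ * sinZeta ((x / π : ℝ) : UnitAddCircle) (2 * (m : ℂ))) := by
    refine (h2.mul_left (((2 : ℂ) ^ (2 * m))⁻¹)).congr_fun fun k => ?_
    simp only [hf]
    have e1 : ((2 * k : ℕ) : ℝ) * x = (k : ℝ) * (2 * x) := by push_cast; ring
    have e2 : ((2 * k : ℕ) : ℂ) ^ (2 * m) = 2 ^ (2 * m) * (k : ℂ) ^ (2 * m) := by
      push_cast; rw [mul_pow]
    rw [e1, e2, div_eq_mul_inv, mul_inv, div_eq_mul_inv]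
    ring
  have hsumm : Summable fun k : ℕ => f (2 * k + 1) :=
    h1.summable.comp_injective fun a b hab => by omega
  have h4 : HasSum (fun k : ℕ => f (2 * k + 1)) (∑' k, f (2 * k + 1)) := hsumm.hasSum
  have h5 := h3.even_add_odd h4
  have h6 : (∑' k, f (2 * k + 1)) =
      sinZeta ((x / (2 * π) : ℝ) : UnitAddCircle) (2 * (m : ℂ)) -
        ((2 : ℂ) ^ (2 * m))⁻¹ * sinZeta ((x / π : ℝ) : UnitAddCircle) (2 * (m : ℂ)) := by
    have := h1.unique h5
    linear_combination -this
  rw [← h6]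
  refine h4.congr_fun fun n => ?_
  simp only [hf]
  have e1 : ((2 * n + 1 : ℕ) : ℝ) * x = (2 * (n : ℝ) + 1) * x := by push_cast; ring
  have e2 : ((2 * n + 1 : ℕ) : ℂ) = 2 * (n : ℂ) + 1 := by push_cast; ring
  rw [e1, e2]

end Aux

/-- For a positive integer `m` and `0 < x < π`,
`∑_{n=1}^∞ sin((2n-1)x)/(2n-1)^(2m) = ((-1)^m π^(2m-1)/(2·(2m-1)!)) ·
  (2^(2m) ζ'(1-2m, 1 - x/(2π)) - 2^(2m) ζ'(1-2m, x/(2π))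
   - ζ'(1-2m, 1 - x/π) + ζ'(1-2m, x/π))`. -/


theorem odd_sin_series_even_exponent_closed_form (m : ℕ) (hm : 0 < m)
    (x : ℝ) (hx0 : 0 < x) (hx1 : x < π) :
    Filter.Tendsto
      (fun N : ℕ => ∑ n ∈ Finset.range N,
        (Real.sin ((2 * n + 1) * x) : ℂ) / (2 * (n : ℂ) + 1) ^ (2 * m))
      Filter.atTop
      (𝓝 ((-1) ^ m * (π : ℂ) ^ (2 * m - 1) / (2 * (Nat.factorial (2 * m - 1) : ℂ)) *
        (2 ^ (2 * m) * deriv (fun s => hzeta s (1 - x / (2 * π))) (1 - 2 * (m : ℂ)) -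
          2 ^ (2 * m) * deriv (fun s => hzeta s (x / (2 * π))) (1 - 2 * (m : ℂ)) -
          deriv (fun s => hzeta s (1 - x / π)) (1 - 2 * (m : ℂ)) +
          deriv (fun s => hzeta s (x / π)) (1 - 2 * (m : ℂ))))) := by
  have hπr : (0:ℝ) < π := Real.pi_pos
  have ha1 : 0 < x / (2 * π) := by positivity
  have ha1' : x / (2 * π) < 1 := by
    rw [div_lt_one (by positivity)]; linarith
  have ha2 : 0 < x / π := by positivity
  have ha2' : x / π < 1 := by rw [div_lt_one hπr]; exact hx1
  have H := (hasSum_odd_sin x m hm).tendsto_sum_nat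
  convert H using 2
  rw [sinZeta_even_eq _ m hm, sinZeta_even_eq _ m hm]
  have hc1 := hzeta_deriv_comb (x / (2 * π)) ha1 ha1' m hm
  have hc2 := hzeta_deriv_comb (x / π) ha2 ha2' m hm
  have hπ : (π : ℂ) ≠ 0 := by exact_mod_cast Real.pi_ne_zero
  have hfac : (Nat.factorial (2 * m - 1) : ℂ) ≠ 0 :=
    Nat.cast_ne_zero.mpr (Nat.factorial_ne_zero _)
  have hpm : ((π : ℂ)) ^ (2 * m) = (π : ℂ) ^ (2 * m - 1) * π := by
    rw [← pow_succ]
    congr 1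
    omega
  have h2π : ((2 : ℂ) * π) ^ (2 * m) = 2 ^ (2 * m) * (π : ℂ) ^ (2 * m) := mul_pow _ _ _
  have h2ne : ((2 : ℂ)) ^ (2 * m) ≠ 0 := pow_ne_zero _ two_ne_zero
  set Z1 := deriv (fun s => hzeta s (1 - x / (2 * π))) (1 - 2 * (m:ℂ)) with hZ1d
  set Z2 := deriv (fun s => hzeta s (x / (2 * π))) (1 - 2 * (m:ℂ)) with hZ2d
  set Z3 := deriv (fun s => hzeta s (1 - x / π)) (1 - 2 * (m:ℂ)) with hZ3d
  set Z4 := deriv (fun s => hzeta s (x / π)) (1 - 2 * (m:ℂ)) with hZ4d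
  set D1 := deriv (HurwitzZeta.hurwitzZetaOdd ((x / (2 * π) : ℝ) : UnitAddCircle)) (1 - 2 * (m:ℂ)) with hD1d
  set D2 := deriv (HurwitzZeta.hurwitzZetaOdd ((x / π : ℝ) : UnitAddCircle)) (1 - 2 * (m:ℂ)) with hD2d
  have hZ1 : Z1 = Z2 - 2 * D1 := by linear_combination hc1
  have hZ3 : Z3 = Z4 - 2 * D2 := by linear_combination hc2
  rw [hZ1, hZ3, h2π, hpm]
  field_simp
  ring
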